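/- Let A be an n×n real matrix with nonnegative entries whose absolute row sums are all at most γ ∈ [0,1) (i.e., ‖A‖_∞ ≤ γ), let ε > 0 satisfy γ + ε < 1, and let M = Σ_{k=0}^∞ (γ+ε)^{−2k} (Aᵏ)ᵀ Aᵏ. Then the minimum eigenvalue of M satisfies λ_min(M) ≥ 1 and the maximum eigenvalue satisfies λ_max(M) ≤ n / (1 − (γ/(γ+ε))²). -/

import Mathlib

open Finset Matrix

/-- for `M = Σ_k (γ+ε)^{−2k} (Aᵏ)ᵀ Aᵏ` as above, every eigenvalue of `M`
lies between `1` and `n / (1 − (γ/(γ+ε))²)`; i.e. `λ_min(M) ≥ 1` and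
`λ_max(M) ≤ n / (1 − (γ/(γ+ε))²)`. -/
theorem stmt11 (n : ℕ) (hn : 1 ≤ n)
    (γ ε : ℝ) (hγ0 : 0 ≤ γ) (hγ1 : γ < 1) (hε : 0 < ε) (hγε : γ + ε < 1)
    (A : Matrix (Fin n) (Fin n) ℝ)
    (hA0 : ∀ i j, 0 ≤ A i j) (hArow : ∀ i, ∑ j, |A i j| ≤ γ)
    (M : Matrix (Fin n) (Fin n) ℝ)
    (hM : M = ∑' k : ℕ, ((γ + ε)⁻¹ ^ (2 * k)) • ((A ^ k)ᵀ * A ^ k))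
    (hHerm : M.IsHermitian) :
    ∀ i : Fin n,
      1 ≤ hHerm.eigenvalues i ∧
        hHerm.eigenvalues i ≤ (n : ℝ) / (1 - (γ / (γ + ε)) ^ 2) := by
  intro i
  have hγε0 : 0 < γ + ε := by linarith
  set c : ℕ → ℝ := fun k => (γ + ε)⁻¹ ^ (2 * k) with hcdef
  set r : ℝ := (γ / (γ + ε)) ^ 2 with hrdef
  have hc0 : ∀ k, 0 ≤ c k := fun k => pow_nonneg (inv_nonneg.2 hγε0.le) _
  have hr0 : 0 ≤ r := sq_nonneg _
  have hdiv01 : 0 ≤ γ / (γ + ε) := div_nonneg hγ0 hγε0.le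
  have hdiv1 : γ / (γ + ε) < 1 := (div_lt_one hγε0).2 (by linarith)
  have hr1 : r < 1 := by
    rw [hrdef]
    exact pow_lt_one₀ hdiv01 hdiv1 (by norm_num)
  -- key identity : c k * γ ^ (2*k) = r ^ k
  have hcr : ∀ k, c k * γ ^ (2 * k) = r ^ k := by
    intro k
    have h : r ^ k = γ ^ (2 * k) * (γ + ε)⁻¹ ^ (2 * k) := by
      rw [hrdef, ← pow_mul, div_eq_mul_inv, mul_pow]
    rw [h]
    simp only [hcdef]
    ring
  -- powers of A have nonneg entries and row sums ≤ γ^k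
  have hpow : ∀ k : ℕ, (∀ a b, 0 ≤ (A ^ k) a b) ∧ ∀ a, ∑ b, (A ^ k) a b ≤ γ ^ k := by
    intro k
    induction k with
    | zero =>
      constructor
      · intro a b; simp [Matrix.one_apply]; positivity
      · intro a; simp [Matrix.one_apply]
    | succ k ih =>
      have hA0' : ∀ a b, 0 ≤ (A ^ (k + 1)) a b := by
        intro a b
        rw [pow_succ', Matrix.mul_apply]
        exact Finset.sum_nonneg fun l _ => mul_nonneg (hA0 a l) (ih.1 l b)
      refine ⟨hA0', fun a => ?_⟩
      have hArow' : ∀ a, ∑ b, A a b ≤ γ := by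
        intro a
        have := hArow a
        simpa [abs_of_nonneg (hA0 a _)] using this
      calc ∑ b, (A ^ (k + 1)) a b
          = ∑ b, ∑ l, A a l * (A ^ k) l b := by
            simp [pow_succ', Matrix.mul_apply]
        _ = ∑ l, A a l * ∑ b, (A ^ k) l b := by
            rw [Finset.sum_comm]; simp [Finset.mul_sum]
        _ ≤ ∑ l, A a l * γ ^ k := by
            refine Finset.sum_le_sum fun l _ => ?_
            exact mul_le_mul_of_nonneg_left (ih.2 l) (hA0 a l)
        _ = (∑ l, A a l) * γ ^ k := by rw [Finset.sum_mul]
        _ ≤ γ * γ ^ k := by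
            exact mul_le_mul_of_nonneg_right (hArow' a) (pow_nonneg hγ0 k)
        _ = γ ^ (k + 1) := by ring
  have hentry : ∀ k a b, (A ^ k) a b ≤ γ ^ k := by
    intro k a b
    calc (A ^ k) a b ≤ ∑ b', (A ^ k) a b' :=
          Finset.single_le_sum (fun b' _ => (hpow k).1 a b') (Finset.mem_univ b)
      _ ≤ γ ^ k := (hpow k).2 a
  -- eigenvector
  set v : EuclideanSpace ℝ (Fin n) := hHerm.eigenvectorBasis i with hvdef
  have hMv : M *ᵥ ⇑v = hHerm.eigenvalues i • ⇑v := hHerm.mulVec_eigenvectorBasis i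
  have hvv : ∑ j, v j * v j = 1 := by
    have h1 : ‖v‖ = 1 := hHerm.eigenvectorBasis.orthonormal.1 i
    have h2 : (inner ℝ v v : ℝ) = 1 := by
      rw [real_inner_self_eq_norm_sq, h1]; norm_num
    rw [← h2]
    rw [PiLp.inner_apply]
    simp [RCLike.inner_apply, mul_comm, sq]
  have hvabs : ∀ j, |v j| ≤ 1 := by
    intro j
    rw [abs_le_one_iff_mul_self_le_one]
    calc v j * v j ≤ ∑ j', v j' * v j' :=
          Finset.single_le_sum (fun j' _ => mul_self_nonneg (v j')) (Finset.mem_univ j)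
      _ = 1 := hvv
  -- the summands
  set f : ℕ → Matrix (Fin n) (Fin n) ℝ := fun k => c k • ((A ^ k)ᵀ * A ^ k) with hfdef
  have hfapp : ∀ k a b, f k a b = c k * ∑ l, (A ^ k) l a * (A ^ k) l b := by
    intro k a b
    simp only [hfdef, Matrix.smul_apply, smul_eq_mul, Matrix.mul_apply,
      Matrix.transpose_apply]
  have hfnonneg : ∀ k a b, 0 ≤ f k a b := by
    intro k a b
    rw [hfapp]
    exact mul_nonneg (hc0 k) (Finset.sum_nonneg fun l _ =>
      mul_nonneg ((hpow k).1 l a) ((hpow k).1 l b))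
  have hfle : ∀ k a b, f k a b ≤ (n : ℝ) * r ^ k := by
    intro k a b
    rw [hfapp]
    have h1 : ∑ l, (A ^ k) l a * (A ^ k) l b ≤ (n : ℝ) * γ ^ (2 * k) := by
      calc ∑ l, (A ^ k) l a * (A ^ k) l b ≤ ∑ _l : Fin n, γ ^ k * γ ^ k := by
            refine Finset.sum_le_sum fun l _ => ?_
            exact mul_le_mul (hentry k l a) (hentry k l b) ((hpow k).1 l b)
              (pow_nonneg hγ0 k)
        _ = (n : ℝ) * γ ^ (2 * k) := by
            rw [Finset.sum_const, Finset.card_univ, Fintype.card_fin, nsmul_eq_mul]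
            ring
    calc c k * ∑ l, (A ^ k) l a * (A ^ k) l b ≤ c k * ((n : ℝ) * γ ^ (2 * k)) :=
          mul_le_mul_of_nonneg_left h1 (hc0 k)
      _ = (n : ℝ) * (c k * γ ^ (2 * k)) := by ring
      _ = (n : ℝ) * r ^ k := by rw [hcr k]
  -- summability
  have hgeo : Summable (fun k : ℕ => (n : ℝ) * r ^ k) :=
    (summable_geometric_of_lt_one hr0 hr1).mul_left _
  have hsf : Summable f := by
    refine Pi.summable.2 fun a => Pi.summable.2 fun b => ?_
    exact Summable.of_nonneg_of_le (fun k => hfnonneg k a b) (fun k => hfle k a b) hgeo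
  -- quadratic form
  set Q : Matrix (Fin n) (Fin n) ℝ →ₗ[ℝ] ℝ :=
    { toFun := fun N => ⇑v ⬝ᵥ (N *ᵥ ⇑v)
      map_add' := fun N P => by simp [Matrix.add_mulVec, dotProduct_add]
      map_smul' := fun t N => by simp [Matrix.smul_mulVec, dotProduct_smul] } with hQdef
  have hQc : Continuous Q := Q.continuous_of_finiteDimensional
  have hQsum : HasSum (fun k => Q (f k)) (Q M) := by
    rw [hM]
    exact hsf.hasSum.map Q.toAddMonoidHom hQc
  have hQM : Q M = hHerm.eigenvalues i := by
    show ⇑v ⬝ᵥ (M *ᵥ ⇑v) = _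
    rw [hMv, dotProduct_smul, smul_eq_mul]
    have : ⇑v ⬝ᵥ ⇑v = 1 := hvv
    rw [this, mul_one]
  -- value of each term
  have hQf : ∀ k, Q (f k) = c k * ((A ^ k *ᵥ ⇑v) ⬝ᵥ (A ^ k *ᵥ ⇑v)) := by
    intro k
    show ⇑v ⬝ᵥ ((c k • ((A ^ k)ᵀ * A ^ k)) *ᵥ ⇑v) = _
    rw [Matrix.smul_mulVec, dotProduct_smul, smul_eq_mul]
    congr 1
    rw [← Matrix.mulVec_mulVec, Matrix.dotProduct_mulVec, Matrix.vecMul_transpose]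
  have hterm0 : ∀ k, 0 ≤ Q (f k) := by
    intro k
    rw [hQf]
    exact mul_nonneg (hc0 k) (Finset.sum_nonneg fun l _ => mul_self_nonneg _)
  have htermle : ∀ k, Q (f k) ≤ (n : ℝ) * r ^ k := by
    intro k
    rw [hQf]
    have hw : ∀ a, |(A ^ k *ᵥ ⇑v) a| ≤ γ ^ k := by
      intro a
      calc |(A ^ k *ᵥ ⇑v) a| = |∑ j, (A ^ k) a j * v j| := rfl
        _ ≤ ∑ j, |(A ^ k) a j * v j| := Finset.abs_sum_le_sum_abs _ _
        _ = ∑ j, (A ^ k) a j * |v j| := by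
            refine Finset.sum_congr rfl fun j _ => ?_
            rw [abs_mul, abs_of_nonneg ((hpow k).1 a j)]
        _ ≤ ∑ j, (A ^ k) a j * 1 := by
            refine Finset.sum_le_sum fun j _ => ?_
            exact mul_le_mul_of_nonneg_left (hvabs j) ((hpow k).1 a j)
        _ = ∑ j, (A ^ k) a j := by simp
        _ ≤ γ ^ k := (hpow k).2 a
    have h2 : (A ^ k *ᵥ ⇑v) ⬝ᵥ (A ^ k *ᵥ ⇑v) ≤ (n : ℝ) * γ ^ (2 * k) := by
      calc (A ^ k *ᵥ ⇑v) ⬝ᵥ (A ^ k *ᵥ ⇑v) = ∑ a, (A ^ k *ᵥ ⇑v) a * (A ^ k *ᵥ ⇑v) a := rfl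
        _ ≤ ∑ _a : Fin n, γ ^ k * γ ^ k := by
            refine Finset.sum_le_sum fun a _ => ?_
            have := hw a
            nlinarith [abs_nonneg ((A ^ k *ᵥ ⇑v) a), neg_abs_le ((A ^ k *ᵥ ⇑v) a),
              le_abs_self ((A ^ k *ᵥ ⇑v) a)]
        _ = (n : ℝ) * γ ^ (2 * k) := by
            rw [Finset.sum_const, Finset.card_univ, Fintype.card_fin, nsmul_eq_mul]
            ring
    calc c k * ((A ^ k *ᵥ ⇑v) ⬝ᵥ (A ^ k *ᵥ ⇑v)) ≤ c k * ((n : ℝ) * γ ^ (2 * k)) :=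
          mul_le_mul_of_nonneg_left h2 (hc0 k)
      _ = (n : ℝ) * (c k * γ ^ (2 * k)) := by ring
      _ = (n : ℝ) * r ^ k := by rw [hcr k]
  have hQf0 : Q (f 0) = 1 := by
    rw [hQf]
    simp [hcdef, Matrix.one_mulVec, hvv, dotProduct]
  constructor
  · -- lower bound
    rw [← hQM, ← hQsum.tsum_eq]
    calc (1 : ℝ) = Q (f 0) := hQf0.symm
      _ ≤ ∑' k, Q (f k) := Summable.le_tsum ⟨_, hQsum⟩ 0 fun k _ => hterm0 k
  · -- upper bound
    rw [← hQM, ← hQsum.tsum_eq]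
    calc ∑' k, Q (f k) ≤ ∑' k, (n : ℝ) * r ^ k := Summable.tsum_le_tsum htermle ⟨_, hQsum⟩ hgeo
      _ = (n : ℝ) * (1 - r)⁻¹ := by
          rw [tsum_mul_left, tsum_geometric_of_lt_one hr0 hr1]
      _ = (n : ℝ) / (1 - r) := (div_eq_mul_inv _ _).symm
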